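/- Let 𝔐 = (V, ⟨·,·⟩, R) be a Riemannian model which is skew-Tsankov. Then there is an orthogonal direct sum decomposition V = V₁ ⊕ ⋯ ⊕ V_k ⊕ U, where each Vᵢ is 2-dimensional and the summands are pairwise orthogonal, such that R(x,y,z,w) = 0 unless all four arguments x,y,z,w lie in one and the same subspace Vᵢ (in particular R vanishes whenever one of its arguments lies in U). -/

import Mathlib

open Module Submodule LinearMap RealInnerProductSpace

/-- Restricted family of operators on a submodule. -/
def Fam {E : Type*} [NormedAddCommGroup E] [InnerProductSpace ℝ E]
    (𝔄 : Set (E →ₗ[ℝ] E)) (q : Submodule ℝ E) : Set (q →ₗ[ℝ] q) :=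
  {T | ∃ A ∈ 𝔄, ∀ x : q, (T x : E) = A x}

/-- Decomposition of a subspace `q` into 2-dimensional invariant pieces plus joint kernel. -/
def DecompIn {E : Type*} [NormedAddCommGroup E] [InnerProductSpace ℝ E]
    (𝔄 : Set (E →ₗ[ℝ] E)) (q : Submodule ℝ E) : Prop :=
  ∃ (ι : Type) (_ : Fintype ι) (Vs : ι → Submodule ℝ E) (U : Submodule ℝ E),
    (∀ i, Vs i ≤ q) ∧ U ≤ q ∧
    (∀ i, Module.finrank ℝ (Vs i) = 2) ∧
    (∀ i j, i ≠ j → ∀ x ∈ Vs i, ∀ y ∈ Vs j, ⟪x, y⟫ = 0) ∧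
    (∀ i, ∀ x ∈ Vs i, ∀ y ∈ U, ⟪x, y⟫ = 0) ∧
    ((⨆ i, Vs i) ⊔ U = q) ∧
    (∀ A ∈ 𝔄, ∀ i, ∀ v ∈ Vs i, A v ∈ Vs i) ∧
    (∀ A ∈ 𝔄, ∀ u ∈ U, A u = 0)

lemma famSkew {E : Type*} [NormedAddCommGroup E] [InnerProductSpace ℝ E]
    {𝔄 : Set (E →ₗ[ℝ] E)} (hsk : ∀ A ∈ 𝔄, ∀ x y : E, ⟪A x, y⟫ = -⟪x, A y⟫)
    (q : Submodule ℝ E) :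
    ∀ T ∈ Fam 𝔄 q, ∀ x y : q, ⟪T x, y⟫ = -⟪x, T y⟫ := by
  rintro T ⟨A, hA, hTA⟩ x y
  rw [Submodule.coe_inner, Submodule.coe_inner, hTA, hTA]
  exact hsk A hA x y

lemma famComm {E : Type*} [NormedAddCommGroup E] [InnerProductSpace ℝ E]
    {𝔄 : Set (E →ₗ[ℝ] E)} (hc : ∀ A ∈ 𝔄, ∀ C ∈ 𝔄, A ∘ₗ C = C ∘ₗ A)
    (q : Submodule ℝ E) (hq : ∀ A ∈ 𝔄, ∀ x ∈ q, A x ∈ q) :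
    ∀ T ∈ Fam 𝔄 q, ∀ T' ∈ Fam 𝔄 q, T ∘ₗ T' = T' ∘ₗ T := by
  rintro T ⟨A, hA, hTA⟩ T' ⟨A', hA', hTA'⟩
  ext x
  have h := congrArg (fun f => f (x : E)) (hc A hA A' hA')
  simp only [LinearMap.comp_apply] at h ⊢
  rw [hTA, hTA', hTA', hTA, h]

lemma liftHalf {E : Type*} [NormedAddCommGroup E] [InnerProductSpace ℝ E]
    (𝔄 : Set (E →ₗ[ℝ] E)) (q : Submodule ℝ E)
    (hq : ∀ A ∈ 𝔄, ∀ x ∈ q, A x ∈ q)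
    (h : DecompIn (Fam 𝔄 q) (⊤ : Submodule ℝ q)) : DecompIn 𝔄 q := by
  obtain ⟨ι, hι, Vs, U, -, -, hdim, horth, horthU, hsup, hinv, hker⟩ := h
  refine ⟨ι, hι, fun i => (Vs i).map q.subtype, U.map q.subtype, ?_, ?_, ?_, ?_, ?_, ?_, ?_, ?_⟩
  · exact fun i => Submodule.map_subtype_le q (Vs i)
  · exact Submodule.map_subtype_le q U
  · exact fun i => (Submodule.finrank_map_subtype_eq q (Vs i)).trans (hdim i)
  · rintro i j hij x ⟨x', hx', rfl⟩ y ⟨y', hy', rfl⟩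
    have := horth i j hij x' hx' y' hy'
    rwa [Submodule.coe_inner] at this
  · rintro i x ⟨x', hx', rfl⟩ y ⟨y', hy', rfl⟩
    have := horthU i x' hx' y' hy'
    rwa [Submodule.coe_inner] at this
  · rw [← Submodule.map_iSup, ← Submodule.map_sup, hsup, Submodule.map_subtype_top]
  · rintro A hA i v ⟨v', hv', rfl⟩
    have hmem : A.restrict (fun x hx => hq A hA x hx) ∈ Fam 𝔄 q := ⟨A, hA, fun x => rfl⟩
    have := hinv _ hmem i v' hv'
    exact ⟨_, this, rfl⟩
  · rintro A hA u ⟨u', hu', rfl⟩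
    have hmem : A.restrict (fun x hx => hq A hA x hx) ∈ Fam 𝔄 q := ⟨A, hA, fun x => rfl⟩
    have h0 := hker _ hmem u' hu'
    have : (A.restrict (fun x hx => hq A hA x hx) u' : E) = A u' := rfl
    rw [h0] at this
    simpa using this.symm

lemma combine {E : Type*} [NormedAddCommGroup E] [InnerProductSpace ℝ E]
    {𝔄 : Set (E →ₗ[ℝ] E)} {p q : Submodule ℝ E}
    (hpq : ∀ x ∈ p, ∀ y ∈ q, ⟪x, y⟫ = 0)
    (h1 : DecompIn 𝔄 p) (h2 : DecompIn 𝔄 q) : DecompIn 𝔄 (p ⊔ q) := by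
  obtain ⟨ι₁, i₁, Vs₁, U₁, hle₁, hUle₁, hdim₁, horth₁, horthU₁, hsup₁, hinv₁, hker₁⟩ := h1
  obtain ⟨ι₂, i₂, Vs₂, U₂, hle₂, hUle₂, hdim₂, horth₂, horthU₂, hsup₂, hinv₂, hker₂⟩ := h2
  have hqp : ∀ x ∈ q, ∀ y ∈ p, ⟪x, y⟫ = 0 := fun x hx y hy => by
    rw [real_inner_comm]; exact hpq y hy x hx
  refine ⟨ι₁ ⊕ ι₂, inferInstance, Sum.elim Vs₁ Vs₂, U₁ ⊔ U₂, ?_, ?_, ?_, ?_, ?_, ?_, ?_, ?_⟩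
  · rintro (i | i)
    · exact (hle₁ i).trans le_sup_left
    · exact (hle₂ i).trans le_sup_right
  · exact sup_le (hUle₁.trans le_sup_left) (hUle₂.trans le_sup_right)
  · rintro (i | i) <;> [exact hdim₁ i; exact hdim₂ i]
  · rintro (i | i) (j | j) hij x hx y hy
    · exact horth₁ i j (by simpa using hij) x hx y hy
    · exact hpq x (hle₁ i hx) y (hle₂ j hy)
    · exact hqp x (hle₂ i hx) y (hle₁ j hy)
    · exact horth₂ i j (by simpa using hij) x hx y hy
  · rintro (i | i) x hx y hy <;>
    · obtain ⟨y₁, hy₁, y₂, hy₂, rfl⟩ := Submodule.mem_sup.mp hy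
      rw [inner_add_right]
      first
      | rw [horthU₁ i x hx y₁ hy₁, hpq x (hle₁ i hx) y₂ (hUle₂ hy₂)]; ring
      | rw [horthU₂ i x hx y₂ hy₂, hqp x (hle₂ i hx) y₁ (hUle₁ hy₁)]; ring
  · rw [iSup_sum]
    simp only [Sum.elim_inl, Sum.elim_inr]
    rw [sup_sup_sup_comm, hsup₁, hsup₂]
  · rintro A hA (i | i) v hv
    · exact hinv₁ A hA i v hv
    · exact hinv₂ A hA i v hv
  · rintro A hA u hu
    obtain ⟨u₁, hu₁, u₂, hu₂, rfl⟩ := Submodule.mem_sup.mp hu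
    rw [map_add, hker₁ A hA u₁ hu₁, hker₂ A hA u₂ hu₂, add_zero]

lemma rispos {F : Type*} [NormedAddCommGroup F] [InnerProductSpace ℝ F] {x : F}
    (hx : x ≠ 0) : 0 < ⟪x, x⟫ := by
  rcases (real_inner_self_nonneg (x := x)).lt_or_eq with h | h
  · exact h
  · exact absurd (inner_self_eq_zero.mp h.symm) hx

lemma exists_eigen {E : Type*} [NormedAddCommGroup E] [InnerProductSpace ℝ E]
    [FiniteDimensional ℝ E] (hE : Module.finrank ℝ E ≠ 0) {T : E →ₗ[ℝ] E}
    (hT : T.IsSymmetric) : ∃ μ, Module.End.eigenspace T μ ≠ ⊥ := by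
  by_contra h
  push_neg at h
  have h2 := hT.orthogonalComplement_iSup_eigenspaces_eq_bot
  simp only [h, iSup_bot, Submodule.bot_orthogonal_eq_top] at h2
  have : Module.finrank ℝ E = 0 := by
    rw [← finrank_top ℝ E, h2, finrank_bot]
  exact hE this
universe u

theorem decomp : ∀ (n : ℕ) (E : Type u) [NormedAddCommGroup E] [InnerProductSpace ℝ E]
    [FiniteDimensional ℝ E], Module.finrank ℝ E = n →
    ∀ (𝔄 : Set (E →ₗ[ℝ] E)),
    (∀ A ∈ 𝔄, ∀ x y : E, ⟪A x, y⟫ = -⟪x, A y⟫) →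
    (∀ A ∈ 𝔄, ∀ C ∈ 𝔄, A ∘ₗ C = C ∘ₗ A) →
    DecompIn 𝔄 (⊤ : Submodule ℝ E) := by
  intro n
  induction n using Nat.strong_induction_on with
  | _ n ih =>
  intro E _ _ _ hn 𝔄 hsk hc
  by_cases h0 : ∀ A ∈ 𝔄, A = 0
  · refine ⟨Empty, inferInstance, Empty.elim, ⊤, fun i => i.elim, le_rfl, fun i => i.elim,
      fun i => i.elim, fun i => i.elim, by simp, fun A hA i => i.elim, fun A hA u _ => by
        rw [h0 A hA]; rfl⟩
  push_neg at h0
  obtain ⟨A, hA, hAne⟩ := h0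
  obtain ⟨x₀, hx₀⟩ : ∃ x, A x ≠ 0 := by
    by_contra h; push_neg at h; exact hAne (LinearMap.ext fun x => by rw [h x]; rfl)
  have hx₀ne : x₀ ≠ 0 := fun h => hx₀ (by rw [h, map_zero])
  have hErank : Module.finrank ℝ E ≠ 0 := by
    have : Nontrivial E := nontrivial_of_ne x₀ 0 hx₀ne
    exact (Module.finrank_pos).ne'
  -- the recursion handler
  have recurse : ∀ p : Submodule ℝ E, p ≠ ⊥ → p ≠ ⊤ →
      (∀ C ∈ 𝔄, ∀ x ∈ p, C x ∈ p) → DecompIn 𝔄 (⊤ : Submodule ℝ E) := by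
    intro p h1 h2 hinvp
    have hinvO : ∀ C ∈ 𝔄, ∀ x ∈ pᗮ, C x ∈ pᗮ := by
      intro C hC x hx
      rw [Submodule.mem_orthogonal]
      intro u hu
      have : ⟪C u, x⟫ = -⟪u, C x⟫ := hsk C hC u x
      have h3 : ⟪C u, x⟫ = 0 := hx (C u) (hinvp C hC u hu)
      rw [h3] at this
      linarith
    have e1 : Module.finrank ℝ p < n := hn ▸ Submodule.finrank_lt h2
    have e2 : Module.finrank ℝ pᗮ < n := by
      exact hn ▸ Submodule.finrank_lt (
        fun h => h1 ((Submodule.orthogonal_eq_top_iff _).mp h))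
    have d1 := ih _ e1 p rfl (Fam 𝔄 p) (famSkew hsk p) (famComm hc p hinvp)
    have d2 := ih _ e2 pᗮ rfl (Fam 𝔄 pᗮ) (famSkew hsk pᗮ) (famComm hc pᗮ hinvO)
    have l1 := liftHalf 𝔄 p hinvp d1
    have l2 := liftHalf 𝔄 pᗮ hinvO d2
    have horth : ∀ x ∈ p, ∀ y ∈ pᗮ, ⟪x, y⟫ = 0 := fun x hx y hy => hy x hx
    have := combine horth l1 l2
    rwa [Submodule.sup_orthogonal_of_hasOrthogonalProjection] at this
  have hcomm' : ∀ C ∈ 𝔄, ∀ D ∈ 𝔄, ∀ x : E, C (D x) = D (C x) :=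
    fun C hC D hD x => congrArg (fun f => f x) (hc C hC D hD)
  set S := A ∘ₗ A with hSdef
  have hSsym : S.IsSymmetric := by
    intro x y
    have h1 := hsk A hA (A x) y
    have h2 := hsk A hA x (A y)
    simp only [hSdef, LinearMap.comp_apply]
    rw [h1]; linarith
  obtain ⟨μ, hμ⟩ := exists_eigen hErank hSsym
  have hinvS : ∀ C ∈ 𝔄, ∀ x ∈ Module.End.eigenspace S μ, C x ∈ Module.End.eigenspace S μ := by
    intro C hC x hx
    rw [Module.End.mem_eigenspace_iff] at hx ⊢
    have e1 : S (C x) = C (S x) := by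
      show A (A (C x)) = C (A (A x))
      rw [hcomm' A hA C hC, hcomm' A hA C hC (A x)]
    rw [e1, hx, map_smul]
  by_cases htop : Module.End.eigenspace S μ = ⊤
  · -- A ∘ A = μ • id with μ < 0
    have hSx : ∀ x : E, A (A x) = μ • x := by
      intro x
      have hx : x ∈ Module.End.eigenspace S μ := by rw [htop]; exact Submodule.mem_top
      exact Module.End.mem_eigenspace_iff.mp hx
    have hμneg : μ < 0 := by
      have h1 : ⟪A (A x₀), x₀⟫ = -⟪A x₀, A x₀⟫ := hsk A hA (A x₀) x₀
      rw [hSx x₀, real_inner_smul_left] at h1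
      have hp1 : (0:ℝ) < ⟪x₀, x₀⟫ := rispos hx₀ne
      have hp2 : (0:ℝ) < ⟪A x₀, A x₀⟫ := rispos hx₀
      nlinarith
    set c := (Real.sqrt (-μ))⁻¹ with hcdef
    set J := c • A with hJdef
    have hcμ : c * c * μ = -1 := by
      have h1 : Real.sqrt (-μ) * Real.sqrt (-μ) = -μ :=
        Real.mul_self_sqrt (by linarith)
      have h2 : Real.sqrt (-μ) ≠ 0 := (Real.sqrt_pos.mpr (by linarith)).ne'
      field_simp [hcdef]
      rw [hcdef, inv_pow, Real.sq_sqrt (by linarith), inv_neg, neg_mul, inv_mul_cancel₀ hμneg.ne]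
    have hJJ : ∀ x : E, J (J x) = -x := by
      intro x
      simp only [hJdef, LinearMap.smul_apply, map_smul, hSx]
      rw [smul_smul, smul_smul, hcμ, neg_one_smul]
    have hJcommAll : ∀ C ∈ 𝔄, ∀ x : E, C (J x) = J (C x) := by
      intro C hC x
      simp only [hJdef, LinearMap.smul_apply, map_smul, hcomm' C hC A hA x]
    have hJskew : ∀ x y : E, ⟪J x, y⟫ = -⟪x, J y⟫ := by
      intro x y
      simp only [hJdef, LinearMap.smul_apply, real_inner_smul_left, real_inner_smul_right,
        hsk A hA x y]
      ring
    by_cases hJsc : ∀ C ∈ 𝔄, ∃ t : ℝ, ∀ x : E, C x = t • J x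
    · -- every operator is a multiple of J
      have hJx₀ : J x₀ ≠ 0 := by
        intro h
        have := hJJ x₀
        rw [h, map_zero] at this
        exact hx₀ne (by simpa using this.symm)
      have horthe : ⟪x₀, J x₀⟫ = 0 := by
        have h1 := hJskew x₀ x₀
        have h2 : ⟪J x₀, x₀⟫ = ⟪x₀, J x₀⟫ := real_inner_comm _ _
        linarith
      have hli : LinearIndependent ℝ ![x₀, J x₀] := by
        rw [linearIndependent_fin2]
        refine ⟨hJx₀, fun a ha => ?_⟩
        simp only [Matrix.cons_val_one, Matrix.head_cons, Matrix.cons_val_zero] at ha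
        have h1 : ⟪a • J x₀, J x₀⟫ = ⟪x₀, J x₀⟫ := by rw [ha]
        rw [real_inner_smul_left, horthe] at h1
        have hp : (0:ℝ) < ⟪J x₀, J x₀⟫ := rispos hJx₀
        have ha0 : a = 0 := by
          rcases mul_eq_zero.mp h1 with h | h
          · exact h
          · exact absurd h hp.ne'
        rw [ha0, zero_smul] at ha
        exact hx₀ne ha.symm
      set V₁ := Submodule.span ℝ (Set.range ![x₀, J x₀]) with hV₁def
      have hx₀V₁ : x₀ ∈ V₁ := Submodule.subset_span ⟨0, rfl⟩
      have hJx₀V₁ : J x₀ ∈ V₁ := Submodule.subset_span ⟨1, rfl⟩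
      have hV₁dim : Module.finrank ℝ V₁ = 2 := by
        rw [hV₁def, finrank_span_eq_card hli]
        simp
      have hJV₁ : ∀ v ∈ V₁, J v ∈ V₁ := by
        intro v hv
        induction hv using Submodule.span_induction with
        | mem x hx =>
            obtain ⟨i, rfl⟩ := hx
            fin_cases i
            · exact hJx₀V₁
            · show J (J x₀) ∈ V₁
              rw [hJJ]
              exact V₁.neg_mem hx₀V₁
        | zero => rw [map_zero]; exact V₁.zero_mem
        | add x y _ _ hx hy => rw [map_add]; exact V₁.add_mem hx hy
        | smul t x _ hx => rw [map_smul]; exact V₁.smul_mem t hx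
      have hinvV₁ : ∀ C ∈ 𝔄, ∀ v ∈ V₁, C v ∈ V₁ := by
        intro C hC v hv
        obtain ⟨t, ht⟩ := hJsc C hC
        rw [ht v]
        exact V₁.smul_mem t (hJV₁ v hv)
      by_cases hV₁top : V₁ = ⊤
      · refine ⟨PUnit, inferInstance, fun _ => V₁, ⊥, fun _ => le_top, bot_le, fun _ => hV₁dim,
          fun i j hij => (hij (Subsingleton.elim i j)).elim, ?_, ?_, fun C hC _ => hinvV₁ C hC,
          fun C hC u hu => by rw [(Submodule.mem_bot ℝ).mp hu, map_zero]⟩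
        · intro i x hx y hy
          rw [(Submodule.mem_bot ℝ).mp hy, inner_zero_right]
        · rw [iSup_const, sup_bot_eq, hV₁top]
      · exact recurse V₁ (Submodule.ne_bot_iff _ |>.mpr ⟨x₀, hx₀V₁, hx₀ne⟩) hV₁top hinvV₁
    · push_neg at hJsc
      obtain ⟨Bo, hBo, hBne⟩ := hJsc
      set T := J ∘ₗ Bo with hTdef
      have hBoJ : ∀ x : E, Bo (J x) = J (Bo x) := hJcommAll Bo hBo
      have hTsym : T.IsSymmetric := by
        intro x y
        have h1 := hJskew (Bo x) y
        have h2 := hsk Bo hBo x (J y)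
        have h3 : ⟪x, Bo (J y)⟫ = ⟪x, J (Bo y)⟫ := congrArg (fun v => ⟪x, v⟫) (hBoJ y)
        simp only [hTdef, LinearMap.comp_apply]
        linarith
      obtain ⟨ν, hν⟩ := exists_eigen hErank hTsym
      by_cases hTtop : Module.End.eigenspace T ν = ⊤
      · exfalso
        have hTx : ∀ x : E, J (Bo x) = ν • x := by
          intro x
          have hx : x ∈ Module.End.eigenspace T ν := by rw [hTtop]; exact Submodule.mem_top
          exact Module.End.mem_eigenspace_iff.mp hx
        obtain ⟨x, hx⟩ := hBne (-ν)
        apply hx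
        have h1 := congrArg J (hTx x)
        rw [hJJ, map_smul] at h1
        have h2 := congrArg Neg.neg h1
        rw [neg_neg] at h2
        rw [h2, neg_smul]
      · refine recurse (Module.End.eigenspace T ν) hν hTtop ?_
        intro C hC x hx
        rw [Module.End.mem_eigenspace_iff] at hx ⊢
        have e1 : T (C x) = C (T x) := by
          show J (Bo (C x)) = C (J (Bo x))
          rw [hcomm' Bo hBo C hC x, ← hJcommAll C hC (Bo x)]
        rw [e1, hx, map_smul]
  · exact recurse (Module.End.eigenspace S μ) hμ htop hinvS

/-- A Riemannian skew-Tsankov model decomposes as an orthogonal direct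
sum V = V₁ ⊕ ⋯ ⊕ V_k ⊕ U with each Vᵢ of dimension 2, such that R vanishes unless all
four of its (pure) arguments lie in one and the same Vᵢ. -/
theorem stmt10 {V : Type*} [AddCommGroup V] [Module ℝ V] [FiniteDimensional ℝ V]
    (B : V →ₗ[ℝ] V →ₗ[ℝ] ℝ)
    (hBsymm : ∀ x y, B x y = B y x)
    (hBpos : ∀ x, x ≠ 0 → 0 < B x x)
    (R : V →ₗ[ℝ] V →ₗ[ℝ] V →ₗ[ℝ] V →ₗ[ℝ] ℝ)
    (hR1 : ∀ x y z w, R x y z w = -R y x z w)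
    (hR2 : ∀ x y z w, R x y z w = R z w x y)
    (hR3 : ∀ x y z w, R x y z w + R y z x w + R z x y w = 0)
    (Rop : V → V → V →ₗ[ℝ] V)
    (hRop : ∀ x y z w, B (Rop x y z) w = R x y z w)
    (hST : ∀ x₁ x₂ x₃ x₄ : V, (Rop x₁ x₂) ∘ₗ (Rop x₃ x₄) = (Rop x₃ x₄) ∘ₗ (Rop x₁ x₂)) :
    ∃ (k : ℕ) (Vs : Fin k → Submodule ℝ V) (U : Submodule ℝ V),
      (∀ i, Module.finrank ℝ (Vs i) = 2) ∧
      (∀ i j, i ≠ j → ∀ x ∈ Vs i, ∀ y ∈ Vs j, B x y = 0) ∧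
      (∀ i, ∀ x ∈ Vs i, ∀ y ∈ U, B x y = 0) ∧
      ((⨆ i, Vs i) ⊔ U = ⊤) ∧
      (∀ x y z w : V,
        (x ∈ U ∨ ∃ i, x ∈ Vs i) → (y ∈ U ∨ ∃ i, y ∈ Vs i) →
        (z ∈ U ∨ ∃ i, z ∈ Vs i) → (w ∈ U ∨ ∃ i, w ∈ Vs i) →
        (¬ ∃ i, x ∈ Vs i ∧ y ∈ Vs i ∧ z ∈ Vs i ∧ w ∈ Vs i) →
        R x y z w = 0) := by
  have hBdef : ∀ x : V, B x x = 0 → x = 0 := by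
    intro x hx
    by_contra h
    exact (hBpos x h).ne' hx
  have hR4 : ∀ a b x y : V, R a b x y = -R a b y x := by
    intro a b x y
    rw [hR2 a b x y, hR1 x y a b, hR2 y x a b]
  letI core : InnerProductSpace.Core ℝ V :=
    { inner := fun x y => B x y
      conj_inner_symm := fun x y => by simpa using hBsymm y x
      re_inner_nonneg := fun x => by
        rcases eq_or_ne x 0 with rfl | h
        · simp
        · exact le_of_lt (by simpa using hBpos x h)
      add_left := fun x y z => by simp
      smul_left := fun x y r => by simp
      definite := hBdef }
  letI : NormedAddCommGroup V := core.toNormedAddCommGroup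
  letI : InnerProductSpace ℝ V := InnerProductSpace.ofCore core.toCore
  haveI : FiniteDimensional ℝ V := ‹FiniteDimensional ℝ V›
  set 𝔄 : Set (V →ₗ[ℝ] V) := {T | ∃ a b, T = Rop a b} with h𝔄
  have hsk : ∀ A ∈ 𝔄, ∀ x y : V, ⟪A x, y⟫ = -⟪x, A y⟫ := by
    rintro A ⟨a, b, rfl⟩ x y
    show B (Rop a b x) y = -B x (Rop a b y)
    rw [hRop, hBsymm x (Rop a b y), hRop, hR4]
  have hc : ∀ A ∈ 𝔄, ∀ C ∈ 𝔄, A ∘ₗ C = C ∘ₗ A := by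
    rintro A ⟨a, b, rfl⟩ C ⟨c, d, rfl⟩
    exact hST a b c d
  obtain ⟨ι, hι, Vs0, U, hle, hUle, hdim, horth, horthU, hsup, hinv, hker⟩ :=
    decomp (Module.finrank ℝ V) V rfl 𝔄 hsk hc
  letI := hι
  let e : Fin (Fintype.card ι) ≃ ι := (Fintype.equivFin ι).symm
  set k := Fintype.card ι
  set Vs : Fin k → Submodule ℝ V := fun i => Vs0 (e i) with hVs
  have horth' : ∀ i j, i ≠ j → ∀ x ∈ Vs i, ∀ y ∈ Vs j, B x y = 0 := by
    intro i j hij x hx y hy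
    exact horth (e i) (e j) (fun h => hij (e.injective h)) x hx y hy
  have horthU' : ∀ i, ∀ x ∈ Vs i, ∀ y ∈ U, B x y = 0 := fun i => horthU (e i)
  have uniq : ∀ v : V, v ≠ 0 → ∀ i j, v ∈ Vs i → v ∈ Vs j → i = j := by
    intro v hv i j hi hj
    by_contra hne
    exact hv (hBdef v (horth' i j hne v hi v hj))
  have pairR : ∀ x y z w : V, (z ∈ U ∨ ∃ i, z ∈ Vs i) → (w ∈ U ∨ ∃ i, w ∈ Vs i) →
      (¬ ∃ i, z ∈ Vs i ∧ w ∈ Vs i) → R x y z w = 0 := by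
    intro x y z w hz hw hzw
    rw [← hRop]
    rcases hz with hz | ⟨i, hz⟩
    · rw [hker (Rop x y) ⟨x, y, rfl⟩ z hz]
      simp
    · rcases hw with hw | ⟨j, hw⟩
      · exact horthU' i _ (hinv (Rop x y) ⟨x, y, rfl⟩ (e i) z hz) w hw
      · rcases eq_or_ne i j with rfl | hij
        · exact absurd ⟨i, hz, hw⟩ hzw
        · exact horth' i j hij _ (hinv (Rop x y) ⟨x, y, rfl⟩ (e i) z hz) w hw
  refine ⟨k, Vs, U, fun i => hdim (e i), horth', horthU', ?_, ?_⟩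
  · rw [show (⨆ i, Vs i) = ⨆ i, Vs0 i from e.iSup_comp, hsup]
  · intro x y z w hx hy hz hw hall
    rcases eq_or_ne x 0 with rfl | hx0
    · simp
    rcases eq_or_ne y 0 with rfl | hy0
    · simp
    rcases eq_or_ne z 0 with rfl | hz0
    · simp
    rcases eq_or_ne w 0 with rfl | hw0
    · simp
    by_cases hzw : ∃ i, z ∈ Vs i ∧ w ∈ Vs i
    · by_cases hxy : ∃ i, x ∈ Vs i ∧ y ∈ Vs i
      · obtain ⟨i, hxi, hyi⟩ := hxy
        obtain ⟨j, hzj, hwj⟩ := hzw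
        rcases eq_or_ne i j with rfl | hij
        · exact absurd ⟨i, hxi, hyi, hzj, hwj⟩ hall
        · have h1 : R y z x w = 0 := by
            apply pairR y z x w (Or.inr ⟨i, hxi⟩) (Or.inr ⟨j, hwj⟩)
            rintro ⟨m, hxm, hwm⟩
            exact hij ((uniq x hx0 i m hxi hxm).trans (uniq w hw0 m j hwm hwj))
          have h2 : R z x y w = 0 := by
            apply pairR z x y w (Or.inr ⟨i, hyi⟩) (Or.inr ⟨j, hwj⟩)
            rintro ⟨m, hym, hwm⟩
            exact hij ((uniq y hy0 i m hyi hym).trans (uniq w hw0 m j hwm hwj))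
          have h3 := hR3 x y z w
          linarith
      · rw [hR2]
        exact pairR z w x y hx hy hxy
    · exact pairR x y z w hz hw hzw
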